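/- arXiv:2211.00766 — 3 statements merged into one kernel-verified Lean document; each statement's English description precedes it below -/
import Mathlib

section
/- Let Q_1, …, Q_k be nonzero good polynomials in m variables. The family {Q_1, …, Q_k} is partition regular over P if and only if it is partition regular over T. -/
/-- `InT p` means `p` is a nonzero good polynomial in one variable, i.e. an element
of the semiring `T`: nonzero, with nonnegative integer coefficients (automatic over `ℕ`)
and zero constant term. -/
def InT (p : Polynomial ℕ) : Prop := p ≠ 0 ∧ p.coeff 0 = 0

/-- `InP q` means `q` is a nonzero good polynomial in countably many variables
`x_1, x_2, …`, i.e. an element of the semiring `P`: nonzero, with nonnegative integer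
coefficients (automatic over `ℕ`) and zero constant term. -/
def InP (q : MvPolynomial ℕ ℕ) : Prop := q ≠ 0 ∧ MvPolynomial.coeff 0 q = 0

noncomputable def phi : MvPolynomial ℕ ℕ →ₐ[ℕ] Polynomial ℕ :=
  MvPolynomial.aeval (fun _ => Polynomial.X)
noncomputable def psi : Polynomial ℕ →ₐ[ℕ] MvPolynomial ℕ ℕ :=
  Polynomial.aeval (MvPolynomial.X 1)

lemma phi_psi (p : Polynomial ℕ) : phi (psi p) = p := by
  show phi (Polynomial.aeval (MvPolynomial.X 1) p) = p
  rw [← Polynomial.aeval_algHom_apply]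
  simp [phi]

lemma eval_one_ne {q : MvPolynomial ℕ ℕ} (h : q ≠ 0) :
    MvPolynomial.eval (fun _ => 1) q ≠ 0 := by
  rw [MvPolynomial.eval_eq]
  simp only [one_pow, Finset.prod_const_one, mul_one]
  intro h0
  rw [Finset.sum_eq_zero_iff] at h0
  apply h
  ext d
  by_cases hd : d ∈ q.support
  · simpa using h0 d hd
  · simpa using MvPolynomial.notMem_support_iff.mp hd

lemma eval_phi (c : ℕ) (q : MvPolynomial ℕ ℕ) :
    Polynomial.eval c (phi q) = MvPolynomial.eval (fun _ => c) q := by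
  show Polynomial.evalRingHom c (MvPolynomial.eval₂ (algebraMap ℕ (Polynomial ℕ)) (fun _ => Polynomial.X) q) = _
  rw [MvPolynomial.eval₂_comp_left, MvPolynomial.eval]
  congr 1
  · exact Subsingleton.elim _ _
  · funext i; simp

lemma phi_ne {q : MvPolynomial ℕ ℕ} (h : q ≠ 0) : phi q ≠ 0 := by
  intro h0
  apply eval_one_ne h
  rw [← eval_phi 1, h0, Polynomial.eval_zero]

lemma phi_coeff0 (q : MvPolynomial ℕ ℕ) : (phi q).coeff 0 = MvPolynomial.coeff 0 q := by
  rw [Polynomial.coeff_zero_eq_eval_zero, eval_phi]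
  simp [← MvPolynomial.constantCoeff_eq]

lemma psi_coeff0 (p : Polynomial ℕ) : MvPolynomial.coeff 0 (psi p) = p.coeff 0 := by
  rw [← MvPolynomial.constantCoeff_eq]
  show MvPolynomial.constantCoeff (Polynomial.eval₂ (algebraMap ℕ (MvPolynomial ℕ ℕ)) (MvPolynomial.X 1) p) = _
  rw [Polynomial.hom_eval₂]
  simp [Polynomial.eval₂_at_zero]

lemma psi_ne {p : Polynomial ℕ} (h : p ≠ 0) : psi p ≠ 0 := by
  intro h0
  apply h
  rw [← phi_psi p, h0, map_zero]

lemma comp_aeval' {A B : Type} [CommSemiring A] [CommSemiring B] [Algebra ℕ A] [Algebra ℕ B]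
    (f : A →ₐ[ℕ] B) {m : ℕ} (a : Fin m → A) (q : MvPolynomial (Fin m) ℕ) :
    f (MvPolynomial.aeval a q) = MvPolynomial.aeval (fun i => f (a i)) q := by
  rw [← MvPolynomial.comp_aeval]
  rfl


theorem stmt8 (m k : ℕ) (Q : Fin k → MvPolynomial (Fin m) ℕ)
    (hQ : ∀ j, Q j ≠ 0 ∧ MvPolynomial.coeff 0 (Q j) = 0) :
    -- partition regularity of the family over `P` ↔ over `T`
    (∀ n : ℕ, ∀ χ : MvPolynomial ℕ ℕ → Fin n,
      ∃ a : Fin m → MvPolynomial ℕ ℕ, (∀ i, InP (a i)) ∧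
        ∀ j j' : Fin k, χ (MvPolynomial.aeval a (Q j)) = χ (MvPolynomial.aeval a (Q j'))) ↔
    (∀ n : ℕ, ∀ χ : Polynomial ℕ → Fin n,
      ∃ a : Fin m → Polynomial ℕ, (∀ i, InT (a i)) ∧
        ∀ j j' : Fin k, χ (MvPolynomial.aeval a (Q j)) = χ (MvPolynomial.aeval a (Q j'))) := by

  constructor
  · intro H n χ
    obtain ⟨a, ha, hsame⟩ := H n (fun q => χ (phi q))
    refine ⟨fun i => phi (a i), fun i => ⟨phi_ne (ha i).1, by rw [phi_coeff0]; exact (ha i).2⟩, ?_⟩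
    intro j j'
    rw [← comp_aeval' phi a, ← comp_aeval' phi a]
    exact hsame j j'
  · intro H n χ
    obtain ⟨a, ha, hsame⟩ := H n (fun p => χ (psi p))
    refine ⟨fun i => psi (a i), fun i => ⟨psi_ne (ha i).1, by rw [psi_coeff0]; exact (ha i).2⟩, ?_⟩
    intro j j'
    rw [← comp_aeval' psi a, ← comp_aeval' psi a]
    exact hsame j j'
end

section
/- Let Q_1, …, Q_k be nonzero good polynomials in m variables, and suppose the family {Q_1, …, Q_k} is partition regular over T. Then for every integral domain R of characteristic zero and every finite coloring of R, there exist a_1, …, a_m ∈ R such that the elements Q_1(a_1, …, a_m), …, Q_k(a_1, …, a_m) are all nonzero and all receive the same color. -/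
lemma poly_eval_one_pos (p : Polynomial ℕ) (hp : p ≠ 0) : 0 < p.eval 1 := by
  rw [Polynomial.eval_eq_sum, Polynomial.sum]
  apply Finset.sum_pos'
  · intro i _; exact Nat.zero_le _
  · obtain ⟨i, hi⟩ := Polynomial.support_nonempty.mpr hp
    exact ⟨i, hi, by simpa using Nat.pos_of_ne_zero (Polynomial.mem_support_iff.mp hi)⟩

lemma mv_eval_pos {m : ℕ} (p : MvPolynomial (Fin m) ℕ) (hp : p ≠ 0)
    (v : Fin m → ℕ) (hv : ∀ i, 0 < v i) : 0 < MvPolynomial.eval v p := by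
  rw [MvPolynomial.eval_eq]
  apply Finset.sum_pos'
  · intro i _; exact Nat.zero_le _
  · obtain ⟨d, hd⟩ := (MvPolynomial.support_nonempty (p := p)).mpr hp
    refine ⟨d, hd, ?_⟩
    apply Nat.mul_pos
    · exact Nat.pos_of_ne_zero (MvPolynomial.mem_support_iff.mp hd)
    · exact Finset.prod_pos fun i _ => pow_pos (hv i) _

theorem stmt10 (m k : ℕ) (Q : Fin k → MvPolynomial (Fin m) ℕ)
    (hQ : ∀ j, Q j ≠ 0 ∧ MvPolynomial.coeff 0 (Q j) = 0)
    -- the family is partition regular over `T`: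
    (hT : ∀ n : ℕ, ∀ χ : Polynomial ℕ → Fin n,
      ∃ a : Fin m → Polynomial ℕ, (∀ i, InT (a i)) ∧
        ∀ j j' : Fin k, χ (MvPolynomial.aeval a (Q j)) = χ (MvPolynomial.aeval a (Q j')))
    -- `R` is an integral domain of characteristic zero:
    (R : Type*) [CommRing R] [IsDomain R] (hchar : ∀ n : ℕ, 0 < n → (n : R) ≠ 0)
    (n : ℕ) (χ : R → Fin n) :
    ∃ a : Fin m → R, (∀ j, MvPolynomial.aeval a (Q j) ≠ 0) ∧
      ∀ j j' : Fin k, χ (MvPolynomial.aeval a (Q j)) = χ (MvPolynomial.aeval a (Q j')) := by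
  -- the ring hom `Polynomial ℕ → R`, `p ↦ ((p.eval 1 : ℕ) : R)`
  set e : Polynomial ℕ →+* R := (Nat.castRingHom R).comp (Polynomial.evalRingHom 1) with he
  obtain ⟨a, ha, hsame⟩ := hT n (fun p => χ (e p))
  have hcomm : ∀ j, MvPolynomial.aeval (fun i => e (a i)) (Q j)
      = e (MvPolynomial.aeval a (Q j)) := by
    intro j
    rw [MvPolynomial.aeval_def, MvPolynomial.aeval_def, MvPolynomial.eval₂_comp_left e]
    congr 1
    exact Subsingleton.elim _ _
  refine ⟨fun i => e (a i), ?_, ?_⟩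
  · -- nonzero claim
    intro j
    rw [hcomm]
    have hpos : 0 < ((MvPolynomial.aeval a (Q j)).eval 1) := by
      have : (MvPolynomial.aeval a (Q j)).eval 1
          = MvPolynomial.eval (fun i => (a i).eval 1) (Q j) := by
        rw [MvPolynomial.aeval_def]
        rw [show ((MvPolynomial.eval₂ (algebraMap ℕ (Polynomial ℕ)) a (Q j)).eval 1)
            = (Polynomial.evalRingHom 1) (MvPolynomial.eval₂ (algebraMap ℕ (Polynomial ℕ)) a (Q j)) from rfl]
        rw [MvPolynomial.eval₂_comp_left]
        rw [MvPolynomial.eval]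
        congr 1
        exact Subsingleton.elim _ _
      rw [this]
      exact mv_eval_pos _ (hQ j).1 _ (fun i => poly_eval_one_pos _ (ha i).1)
    exact hchar _ hpos
  · intro j j'
    rw [hcomm, hcomm]
    exact hsame j j'
end

section
/- Let Q_1, …, Q_k be nonzero good polynomials in m variables. Suppose there exists a coloring χ : T → Fin n that admits no monochromatic instance of the family, i.e., there are no a_1, …, a_m ∈ T with χ(Q_1(a_1, …, a_m)) = ⋯ = χ(Q_k(a_1, …, a_m)). Then there exists a coloring χ' : T → Fin n admitting no monochromatic instance of the family and a positive integer c such that for every x ∈ T and every color K in the range of χ', there is a nonzero good polynomial P in one variable of size at most c with χ'(P(x)) = K. -/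
namespace Stmt11Aux

open Polynomial

lemma coeff_le_eval_one (p : Polynomial ℕ) (i : ℕ) : p.coeff i ≤ p.eval 1 := by
  have h : p.eval 1 = ∑ j ∈ p.support, p.coeff j := by
    rw [eval_eq_sum, Polynomial.sum]; simp
  rw [h]
  by_cases hi : i ∈ p.support
  · exact Finset.single_le_sum (fun j _ => Nat.zero_le _) hi
  · simp [Polynomial.notMem_support_iff.mp hi]

lemma eval_one_pos {p : Polynomial ℕ} (hp : p ≠ 0) : 0 < p.eval 1 := by
  rcases Nat.eq_zero_or_pos (p.eval 1) with h | h
  · exfalso; apply hp; ext i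
    simpa using le_antisymm (h ▸ coeff_le_eval_one p i) (Nat.zero_le _)
  · exact h

lemma eval_one_le_eval {p : Polynomial ℕ} {s : ℕ} (hs : 1 ≤ s) : p.eval 1 ≤ p.eval s := by
  rw [eval_eq_sum, eval_eq_sum, Polynomial.sum, Polynomial.sum]
  apply Finset.sum_le_sum
  intro j _
  have : (1:ℕ) ^ j ≤ s ^ j := Nat.pow_le_pow_left hs j
  calc p.coeff j * 1 ^ j ≤ p.coeff j * s ^ j := Nat.mul_le_mul_left _ this

lemma inT_comp {p q : Polynomial ℕ} (hp : InT p) (hq : InT q) : InT (p.comp q) := by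
  constructor
  · intro h
    have h1 : (p.comp q).eval 1 = p.eval (q.eval 1) := by rw [eval_comp]
    have hq1 : 1 ≤ q.eval 1 := eval_one_pos hq.1
    have : 0 < (p.comp q).eval 1 := by
      rw [h1]; exact lt_of_lt_of_le (eval_one_pos hp.1) (eval_one_le_eval hq1)
    rw [h] at this; simp at this
  · rw [coeff_zero_eq_eval_zero, eval_comp, ← coeff_zero_eq_eval_zero, hq.2,
      ← coeff_zero_eq_eval_zero, hp.2]

lemma inT_X : InT (Polynomial.X : Polynomial ℕ) := ⟨X_ne_zero, by simp⟩

lemma aeval_comp_transfer {m : ℕ} (a : Fin m → Polynomial ℕ) (y : Polynomial ℕ)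
    (q : MvPolynomial (Fin m) ℕ) :
    (MvPolynomial.aeval a q).comp y = MvPolynomial.aeval (fun i => (a i).comp y) q := by
  rw [comp_eq_aeval, MvPolynomial.comp_aeval_apply (f := a) (Polynomial.aeval y) q]
  simp only [comp_eq_aeval]

/-- The shift action of `T` on the space of colorings. -/
noncomputable def shift {n : ℕ} (y : Polynomial ℕ) (ψ : Polynomial ℕ → Fin n) : Polynomial ℕ → Fin n :=
  fun p => ψ (p.comp y)

lemma shift_cont {n : ℕ} (y : Polynomial ℕ) : Continuous (shift (n := n) y) :=
  continuous_pi fun p => continuous_apply (p.comp y)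

lemma shift_shift {n : ℕ} (y P : Polynomial ℕ) (ψ : Polynomial ℕ → Fin n) :
    shift y (shift P ψ) = shift (y.comp P) ψ :=
  funext fun p => congrArg ψ (comp_assoc p y P)

lemma shift_X {n : ℕ} (ψ : Polynomial ℕ → Fin n) : shift Polynomial.X ψ = ψ :=
  funext fun p => congrArg ψ (comp_X (p := p))

end Stmt11Aux

open Stmt11Aux

theorem stmt11 (m k n : ℕ) (Q : Fin k → MvPolynomial (Fin m) ℕ)
    (hQ : ∀ j, Q j ≠ 0 ∧ MvPolynomial.coeff 0 (Q j) = 0)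
    (χ : Polynomial ℕ → Fin n)
    -- `χ` admits no monochromatic instance of the family in `T`:
    (hχ : ¬ ∃ a : Fin m → Polynomial ℕ, (∀ i, InT (a i)) ∧
      ∀ j j' : Fin k, χ (MvPolynomial.aeval a (Q j)) = χ (MvPolynomial.aeval a (Q j'))) :
    ∃ χ' : Polynomial ℕ → Fin n,
      -- `χ'` also admits no monochromatic instance of the family in `T`:
      (¬ ∃ a : Fin m → Polynomial ℕ, (∀ i, InT (a i)) ∧
        ∀ j j' : Fin k, χ' (MvPolynomial.aeval a (Q j)) = χ' (MvPolynomial.aeval a (Q j'))) ∧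
      -- and `χ'` is polynomially syndetic:
      ∃ c : ℕ, 0 < c ∧
        ∀ x : Polynomial ℕ, InT x → ∀ K : Fin n,
          (∃ z : Polynomial ℕ, InT z ∧ χ' z = K) →
          ∃ P : Polynomial ℕ, P ≠ 0 ∧ P.coeff 0 = 0 ∧
            P.natDegree ≤ c ∧ (∀ i, P.coeff i ≤ c) ∧
            χ' (Polynomial.aeval x P) = K := by
  classical
  set M : Set (Polynomial ℕ → Fin n) := {ψ | ¬ ∃ a : Fin m → Polynomial ℕ,
    (∀ i, InT (a i)) ∧ ∀ j j' : Fin k,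
      ψ (MvPolynomial.aeval a (Q j)) = ψ (MvPolynomial.aeval a (Q j'))} with hMdef
  have hMinv : ∀ y, InT y → ∀ ψ ∈ M, shift y ψ ∈ M := by
    rintro y hy ψ hψ ⟨a, ha, hab⟩
    refine hψ ⟨fun i => (a i).comp y, fun i => inT_comp (ha i) hy, fun j j' => ?_⟩
    have h : ψ ((MvPolynomial.aeval a (Q j)).comp y)
        = ψ ((MvPolynomial.aeval a (Q j')).comp y) := hab j j'
    rwa [aeval_comp_transfer, aeval_comp_transfer] at h
  have hMclosed : IsClosed M := by
    rw [← isOpen_compl_iff]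
    have hco : Mᶜ = ⋃ (a : Fin m → Polynomial ℕ), ⋃ (_ : ∀ i, InT (a i)),
        ⋂ (j : Fin k), ⋂ (j' : Fin k), ⋃ (K : Fin n),
          ((fun ψ : Polynomial ℕ → Fin n => ψ (MvPolynomial.aeval a (Q j))) ⁻¹' {K}) ∩
          ((fun ψ : Polynomial ℕ → Fin n => ψ (MvPolynomial.aeval a (Q j'))) ⁻¹' {K}) := by
      ext ψ
      simp only [hMdef, Set.mem_compl_iff, Set.mem_setOf_eq, not_not, Set.mem_iUnion,
        Set.mem_iInter, Set.mem_inter_iff, Set.mem_preimage, Set.mem_singleton_iff]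
      constructor
      · rintro ⟨a, ha, hab⟩
        exact ⟨a, ha, fun j j' => ⟨ψ (MvPolynomial.aeval a (Q j')), hab j j', rfl⟩⟩
      · rintro ⟨a, ha, hab⟩
        refine ⟨a, ha, fun j j' => ?_⟩
        obtain ⟨K, h1, h2⟩ := hab j j'
        rw [h1, h2]
    rw [hco]
    refine isOpen_iUnion fun a => isOpen_iUnion fun _ =>
      isOpen_iInter_of_finite fun j => isOpen_iInter_of_finite fun j' =>
      isOpen_iUnion fun K => IsOpen.inter ?_ ?_
    · exact (continuous_apply _).isOpen_preimage _ (isOpen_discrete _)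
    · exact (continuous_apply _).isOpen_preimage _ (isOpen_discrete _)
  -- the collection of nonempty closed invariant subsets of M
  set 𝒮 : Set (Set (Polynomial ℕ → Fin n)) :=
    {X | X.Nonempty ∧ IsClosed X ∧ X ⊆ M ∧ ∀ y, InT y → ∀ ψ ∈ X, shift y ψ ∈ X} with h𝒮def
  have hM𝒮 : M ∈ 𝒮 := ⟨⟨χ, hχ⟩, hMclosed, le_refl _, hMinv⟩
  have hzorn : ∀ c ⊆ 𝒮, IsChain (· ⊆ ·) c → c.Nonempty →
      ∃ lb ∈ 𝒮, ∀ s ∈ c, lb ⊆ s := by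
    intro c hc𝒮 hchain hcne
    have : Nonempty c := hcne.to_subtype
    refine ⟨⋂₀ c, ⟨?_, ?_, ?_, ?_⟩, fun s hs => Set.sInter_subset_of_mem hs⟩
    · rw [Set.sInter_eq_iInter]
      refine IsCompact.nonempty_iInter_of_directed_nonempty_isCompact_isClosed
        (fun s : c => (s : Set (Polynomial ℕ → Fin n))) ?_ (fun s => (hc𝒮 s.2).1)
        (fun s => ((hc𝒮 s.2).2.1).isCompact) (fun s => (hc𝒮 s.2).2.1)
      rintro ⟨s, hs⟩ ⟨t, ht⟩
      rcases hchain.total hs ht with h | h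
      · exact ⟨⟨s, hs⟩, Set.Subset.refl _, h⟩
      · exact ⟨⟨t, ht⟩, h, Set.Subset.refl _⟩
    · exact isClosed_sInter fun s hs => (hc𝒮 hs).2.1
    · obtain ⟨s, hs⟩ := hcne
      exact (Set.sInter_subset_of_mem hs).trans (hc𝒮 hs).2.2.1
    · intro y hy ψ hψ
      rw [Set.mem_sInter] at hψ ⊢
      exact fun s hs => (hc𝒮 hs).2.2.2 y hy ψ (hψ s hs)
  obtain ⟨X, -, hX𝒮, hXmin⟩ := zorn_superset_nonempty 𝒮 hzorn M hM𝒮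
  obtain ⟨χ', hχ'X⟩ := hX𝒮.1
  have hXclosed := hX𝒮.2.1
  have hXsubM := hX𝒮.2.2.1
  have hXinv := hX𝒮.2.2.2
  -- orbit density from minimality
  have density : ∀ ψ ∈ X, ∀ V : Set (Polynomial ℕ → Fin n), IsOpen V → χ' ∈ V →
      ∃ P, InT P ∧ shift P ψ ∈ V := by
    intro ψ hψ V hV hχ'V
    set O : Set (Polynomial ℕ → Fin n) := {φ | ∃ P, InT P ∧ φ = shift P ψ} with hOdef
    have hOsub : O ⊆ X := by rintro φ ⟨P, hP, rfl⟩; exact hXinv P hP ψ hψ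
    have hY𝒮 : closure O ∈ 𝒮 := by
      refine ⟨⟨ψ, subset_closure ⟨Polynomial.X, inT_X, (shift_X ψ).symm⟩⟩,
        isClosed_closure, (closure_minimal hOsub hXclosed).trans hXsubM, ?_⟩
      intro y hy φ hφ
      have h1 : shift y '' O ⊆ O := by
        rintro _ ⟨φ₀, ⟨P, hP, rfl⟩, rfl⟩
        exact ⟨y.comp P, inT_comp hy hP, shift_shift y P ψ⟩
      exact closure_mono h1 (image_closure_subset_closure_image (shift_cont y) ⟨φ, hφ, rfl⟩)
    have hcl : χ' ∈ closure O :=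
      hXmin hY𝒮 (closure_minimal hOsub hXclosed) hχ'X
    obtain ⟨φ, hφV, P, hP, rfl⟩ := _root_.mem_closure_iff.mp hcl V hV hχ'V
    exact ⟨P, hP, hφV⟩
  -- witnesses for each attained color
  set z : Fin n → Polynomial ℕ := fun K =>
    if h : ∃ w, InT w ∧ χ' w = K then h.choose else Polynomial.X with hzdef
  have hz : ∀ K, (∃ w, InT w ∧ χ' w = K) → InT (z K) ∧ χ' (z K) = K := by
    intro K h
    simp only [hzdef, dif_pos h]
    exact h.choose_spec
  set V : Set (Polynomial ℕ → Fin n) :=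
    {ψ | ∀ K : Fin n, (∃ w, InT w ∧ χ' w = K) → ψ (z K) = K} with hVdef
  have hVopen : IsOpen V := by
    have hVeq : V = ⋂ (K : Fin n), ⋂ (_ : ∃ w, InT w ∧ χ' w = K),
        (fun ψ : Polynomial ℕ → Fin n => ψ (z K)) ⁻¹' {K} := by
      ext ψ
      simp [hVdef]
    rw [hVeq]
    exact isOpen_iInter_of_finite fun K => isOpen_iInter_of_finite fun _ =>
      (continuous_apply _).isOpen_preimage _ (isOpen_discrete _)
  have hχ'V : χ' ∈ V := fun K h => (hz K h).2
  -- extract a finite subcover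
  obtain ⟨F, hF⟩ := (hXclosed.isCompact).elim_finite_subcover
    (fun P : {P : Polynomial ℕ // InT P} => shift P.1 ⁻¹' V)
    (fun P => hVopen.preimage (shift_cont P.1))
    (by
      intro ψ hψ
      obtain ⟨P, hP, hPV⟩ := density ψ hψ V hVopen hχ'V
      exact Set.mem_iUnion.mpr ⟨⟨P, hP⟩, hPV⟩)
  set c : ℕ := (F.sup fun P => Finset.univ.sup fun K : Fin n =>
      ((z K).comp P.1).natDegree + ((z K).comp P.1).eval 1) + 1 with hcdef
  refine ⟨χ', hXsubM hχ'X, c, Nat.succ_pos _, ?_⟩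
  intro x hx K hK
  have hτx : shift x χ' ∈ X := hXinv x hx χ' hχ'X
  obtain ⟨P, hPF, hPV⟩ := Set.mem_iUnion₂.mp (hF hτx)
  have hval : χ' (((z K).comp P.1).comp x) = K := hPV K hK
  have hzK := hz K hK
  have hP'' : InT ((z K).comp P.1) := inT_comp hzK.1 P.2
  have hsup : ((z K).comp P.1).natDegree + ((z K).comp P.1).eval 1 ≤ c := by
    calc ((z K).comp P.1).natDegree + ((z K).comp P.1).eval 1
        ≤ Finset.univ.sup (fun K : Fin n =>
            ((z K).comp P.1).natDegree + ((z K).comp P.1).eval 1) :=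
          Finset.le_sup (f := fun K : Fin n =>
            ((z K).comp P.1).natDegree + ((z K).comp P.1).eval 1) (Finset.mem_univ K)
      _ ≤ F.sup fun P : {P : Polynomial ℕ // InT P} => Finset.univ.sup fun K : Fin n =>
            ((z K).comp P.1).natDegree + ((z K).comp P.1).eval 1 :=
          Finset.le_sup (f := fun P : {P : Polynomial ℕ // InT P} =>
            Finset.univ.sup fun K : Fin n =>
              ((z K).comp P.1).natDegree + ((z K).comp P.1).eval 1) hPF
      _ ≤ c := Nat.le_succ _
  refine ⟨(z K).comp P.1, hP''.1, hP''.2, ?_, ?_, ?_⟩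
  · exact le_trans (Nat.le_add_right _ _) hsup
  · exact fun i => le_trans (coeff_le_eval_one _ i) (le_trans (Nat.le_add_left _ _) hsup)
  · rw [← Polynomial.comp_eq_aeval]
    exact hval
end
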